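/- Consider the closed-loop system: x̃ : ℝ → ℝⁿ and x̃_c : ℝ → ℝ^{nG} are differentiable and satisfy x̃'(t) = (J − R̃(x̃(t)))·Q·x̃(t) + g·ũ(t) and x̃_c'(t) = −k_I·𝓛·ũ_c(t), where ỹ(t) = gᵀQx̃(t), ỹ_c(t) = −𝓛·x̃_c(t), ũ(t) = −r·ỹ(t) − w⁻¹·ỹ_c(t), ũ_c(t) = (w⁻¹)ᵀ·ỹ(t), with w invertible and 𝓛 symmetric. Suppose that for every t the matrix R̃(x̃(t)) + g·r·gᵀ has positive-definite quadratic form (vᵀ(R̃(x̃(t)) + g r gᵀ)v > 0 for all v ≠ 0), and that the total storage H_t(t) = ½x̃(t)ᵀQx̃(t) + ½x̃_c(t)ᵀk_I⁻¹x̃_c(t) is constant in t. Then x̃(t) = 0 for all t, x̃_c is constant, and 𝓛·x̃_c(t) = 0 for all t. -/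

import Mathlib

open Matrix

/-- Index type of the microgrid state: generator currents, line currents, bus charges. -/
abbrev BIdx (nG nE nN : ℕ) := Fin nG ⊕ (Fin nE ⊕ Fin nN)

/-- The input matrix `g = [I; 0; 0]`. -/
noncomputable def gMat (nG nE nN : ℕ) : Matrix (BIdx nG nE nN) (Fin nG) ℝ :=
  Matrix.of fun i j =>
    match i with
    | Sum.inl i' => if i' = j then (1 : ℝ) else 0
    | Sum.inr _ => 0

section helpers

variable {n m : Type*} [Fintype n] [Fintype m]

lemma hasDerivAt_dotProduct {f g : ℝ → n → ℝ} {f' g' : n → ℝ} {t : ℝ}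
    (hf : HasDerivAt f f' t) (hg : HasDerivAt g g' t) :
    HasDerivAt (fun s => f s ⬝ᵥ g s) (f' ⬝ᵥ g t + f t ⬝ᵥ g') t := by
  have h : ∀ i : n, HasDerivAt (fun s => f s i * g s i) (f' i * g t i + f t i * g' i) t :=
    fun i => (hasDerivAt_pi.1 hf i).mul (hasDerivAt_pi.1 hg i)
  have hs := HasDerivAt.fun_sum (u := Finset.univ) (fun i _ => h i)
  simpa [dotProduct, Finset.sum_add_distrib] using hs

lemma hasDerivAt_mulVec {f : ℝ → n → ℝ} {f' : n → ℝ} {t : ℝ}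
    (M : Matrix m n ℝ) (hf : HasDerivAt f f' t) :
    HasDerivAt (fun s => M *ᵥ f s) (M *ᵥ f') t := by
  rw [hasDerivAt_pi]
  intro i
  have h : ∀ j : n, HasDerivAt (fun s => M i j * f s j) (M i j * f' j) t :=
    fun j => (hasDerivAt_pi.1 hf j).const_mul (M i j)
  have hs := HasDerivAt.fun_sum (u := Finset.univ) (fun j _ => h j)
  simpa [Matrix.mulVec, dotProduct] using hs

lemma dot_skew {J : Matrix n n ℝ} (hJ : Jᵀ = -J) (v : n → ℝ) : v ⬝ᵥ (J *ᵥ v) = 0 := by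
  have h1 : v ⬝ᵥ (J *ᵥ v) = (Jᵀ *ᵥ v) ⬝ᵥ v := by
    rw [Matrix.dotProduct_mulVec, Matrix.mulVec_transpose]
  rw [hJ, Matrix.neg_mulVec, neg_dotProduct, dotProduct_comm] at h1
  have h2 : v ⬝ᵥ (J *ᵥ v) = (J *ᵥ v) ⬝ᵥ v := dotProduct_comm _ _
  linarith

lemma gMat_mulVec_inl {nG nE nN : ℕ} (v : Fin nG → ℝ) (i : Fin nG) :
    (gMat nG nE nN *ᵥ v) (Sum.inl i) = v i := by
  simp [gMat, Matrix.mulVec, dotProduct, ite_mul]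

end helpers

/-- **LaSalle invariant-set step of Proposition 2.** Along any complete
closed-loop trajectory on which the total storage is constant and the dissipation matrix
`R̃(x̃(t)) + g r gᵀ` has positive-definite quadratic form, the electrical state vanishes
identically, the controller state is constant and lies in the kernel of `𝓛`. -/
theorem lasalle_invariant_set
    (nG nE nN : ℕ) (hnG : 0 < nG) (hnE : 0 < nE) (hnN : 0 < nN)
    (Rt : (BIdx nG nE nN → ℝ) → Matrix (BIdx nG nE nN) (BIdx nG nE nN) ℝ)
    (Q : Matrix (BIdx nG nE nN) (BIdx nG nE nN) ℝ) (hQsymm : Q.IsSymm) (hQpd : Q.PosDef)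
    (J : Matrix (BIdx nG nE nN) (BIdx nG nE nN) ℝ) (hJ : Jᵀ = -J)
    (kd : Fin nG → ℝ) (hkd : ∀ i, 0 < kd i)
    (L : Matrix (Fin nG) (Fin nG) ℝ) (hL : L.IsSymm)
    (r w : Matrix (Fin nG) (Fin nG) ℝ) (hw : IsUnit w.det)
    (xt : ℝ → (BIdx nG nE nN → ℝ)) (xc : ℝ → (Fin nG → ℝ))
    (hxdiff : ∀ t : ℝ, HasDerivAt xt
      ((J - Rt (xt t)) *ᵥ (Q *ᵥ xt t) +
        gMat nG nE nN *ᵥ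
          (-(r *ᵥ ((gMat nG nE nN)ᵀ *ᵥ (Q *ᵥ xt t))) - w⁻¹ *ᵥ (-(L *ᵥ xc t)))) t)
    (hxcdiff : ∀ t : ℝ, HasDerivAt xc
      (-((Matrix.diagonal kd * L) *ᵥ ((w⁻¹)ᵀ *ᵥ ((gMat nG nE nN)ᵀ *ᵥ (Q *ᵥ xt t))))) t)
    (hpd : ∀ t : ℝ, ∀ v : BIdx nG nE nN → ℝ, v ≠ 0 →
      0 < v ⬝ᵥ ((Rt (xt t) + gMat nG nE nN * r * (gMat nG nE nN)ᵀ) *ᵥ v))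
    (hconst : ∀ t s : ℝ,
      (1 / 2 : ℝ) * ((xt t) ⬝ᵥ (Q *ᵥ xt t)) +
        (1 / 2 : ℝ) * ((xc t) ⬝ᵥ ((Matrix.diagonal kd)⁻¹ *ᵥ xc t)) =
      (1 / 2 : ℝ) * ((xt s) ⬝ᵥ (Q *ᵥ xt s)) +
        (1 / 2 : ℝ) * ((xc s) ⬝ᵥ ((Matrix.diagonal kd)⁻¹ *ᵥ xc s))) :
    (∀ t : ℝ, xt t = 0) ∧ (∀ t s : ℝ, xc t = xc s) ∧ (∀ t : ℝ, L *ᵥ xc t = 0) := by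
  set g : Matrix (BIdx nG nE nN) (Fin nG) ℝ := gMat nG nE nN with hgdef
  set kI : Matrix (Fin nG) (Fin nG) ℝ := Matrix.diagonal kd with hkIdef
  have hkIdet : IsUnit kI.det := by
    rw [hkIdef, Matrix.det_diagonal]
    exact isUnit_iff_ne_zero.2 (Finset.prod_ne_zero_iff.2 fun i _ => (hkd i).ne')
  have hkIsymm : (kI⁻¹)ᵀ = kI⁻¹ := by
    rw [Matrix.transpose_nonsing_inv, hkIdef, Matrix.diagonal_transpose]
  -- Step 1: Q *ᵥ xt t = 0 for all t
  have hy0 : ∀ t, Q *ᵥ xt t = 0 := by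
    intro t
    set y : BIdx nG nE nN → ℝ := Q *ᵥ xt t with hydef
    set xt' : BIdx nG nE nN → ℝ :=
      (J - Rt (xt t)) *ᵥ y + g *ᵥ (-(r *ᵥ (gᵀ *ᵥ y)) - w⁻¹ *ᵥ (-(L *ᵥ xc t))) with hxt'def
    set xc' : Fin nG → ℝ := -((kI * L) *ᵥ ((w⁻¹)ᵀ *ᵥ (gᵀ *ᵥ y))) with hxc'def
    have hQd : HasDerivAt (fun s => Q *ᵥ xt s) (Q *ᵥ xt') t := hasDerivAt_mulVec Q (hxdiff t)
    have hkd' : HasDerivAt (fun s => kI⁻¹ *ᵥ xc s) (kI⁻¹ *ᵥ xc') t :=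
      hasDerivAt_mulVec _ (hxcdiff t)
    have hH : HasDerivAt
        (fun s => (1 / 2 : ℝ) * ((xt s) ⬝ᵥ (Q *ᵥ xt s)) +
          (1 / 2 : ℝ) * ((xc s) ⬝ᵥ (kI⁻¹ *ᵥ xc s)))
        ((1 / 2 : ℝ) * (xt' ⬝ᵥ y + xt t ⬝ᵥ (Q *ᵥ xt')) +
          (1 / 2 : ℝ) * (xc' ⬝ᵥ (kI⁻¹ *ᵥ xc t) + xc t ⬝ᵥ (kI⁻¹ *ᵥ xc'))) t :=
      ((hasDerivAt_dotProduct (hxdiff t) hQd).const_mul _).add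
        ((hasDerivAt_dotProduct (hxcdiff t) hkd').const_mul _)
    have heq : (fun s => (1 / 2 : ℝ) * ((xt s) ⬝ᵥ (Q *ᵥ xt s)) +
          (1 / 2 : ℝ) * ((xc s) ⬝ᵥ (kI⁻¹ *ᵥ xc s))) =
        (fun _ => (1 / 2 : ℝ) * ((xt 0) ⬝ᵥ (Q *ᵥ xt 0)) +
          (1 / 2 : ℝ) * ((xc 0) ⬝ᵥ (kI⁻¹ *ᵥ xc 0))) :=
      funext fun s => hconst s 0
    have hD0 : (1 / 2 : ℝ) * (xt' ⬝ᵥ y + xt t ⬝ᵥ (Q *ᵥ xt')) +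
        (1 / 2 : ℝ) * (xc' ⬝ᵥ (kI⁻¹ *ᵥ xc t) + xc t ⬝ᵥ (kI⁻¹ *ᵥ xc')) = 0 :=
      hH.unique (heq ▸ hasDerivAt_const t _)
    -- algebraic simplification of the derivative
    have hA : xt t ⬝ᵥ (Q *ᵥ xt') = y ⬝ᵥ xt' := by
      rw [Matrix.dotProduct_mulVec, ← Matrix.mulVec_transpose, hQsymm.eq]
    have hA' : xt' ⬝ᵥ y = y ⬝ᵥ xt' := dotProduct_comm _ _
    have hB : xc' ⬝ᵥ (kI⁻¹ *ᵥ xc t) = xc t ⬝ᵥ (kI⁻¹ *ᵥ xc') := by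
      rw [Matrix.dotProduct_mulVec, ← Matrix.mulVec_transpose, hkIsymm, dotProduct_comm]
    have hC : kI⁻¹ *ᵥ xc' = -(L *ᵥ ((w⁻¹)ᵀ *ᵥ (gᵀ *ᵥ y))) := by
      rw [hxc'def, Matrix.mulVec_neg, Matrix.mulVec_mulVec, ← Matrix.mul_assoc,
        Matrix.nonsing_inv_mul kI hkIdet, Matrix.one_mul]
    have hD : xc t ⬝ᵥ (L *ᵥ ((w⁻¹)ᵀ *ᵥ (gᵀ *ᵥ y))) =
        (gᵀ *ᵥ y) ⬝ᵥ (w⁻¹ *ᵥ (L *ᵥ xc t)) := by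
      rw [Matrix.dotProduct_mulVec (xc t) L, ← Matrix.mulVec_transpose, hL.eq,
        Matrix.dotProduct_mulVec _ ((w⁻¹)ᵀ), Matrix.vecMul_transpose, dotProduct_comm]
    have hE : y ⬝ᵥ xt' = -(y ⬝ᵥ ((Rt (xt t) + g * r * gᵀ) *ᵥ y)) +
        (gᵀ *ᵥ y) ⬝ᵥ (w⁻¹ *ᵥ (L *ᵥ xc t)) := by
      rw [hxt'def]
      have hgv : ∀ v : Fin nG → ℝ, y ⬝ᵥ (g *ᵥ v) = (gᵀ *ᵥ y) ⬝ᵥ v := by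
        intro v
        rw [Matrix.dotProduct_mulVec, Matrix.mulVec_transpose]
      rw [Matrix.mulVec_neg, sub_neg_eq_add, Matrix.mulVec_add, Matrix.sub_mulVec,
        dotProduct_add, dotProduct_add, dotProduct_sub, dot_skew hJ, Matrix.mulVec_neg,
        dotProduct_neg, hgv, hgv, Matrix.dotProduct_mulVec (gᵀ *ᵥ y) r]
      have hgr : y ⬝ᵥ ((g * r * gᵀ) *ᵥ y) = (gᵀ *ᵥ y) ᵥ* r ⬝ᵥ (gᵀ *ᵥ y) := by
        rw [show (g * r * gᵀ) *ᵥ y = g *ᵥ (r *ᵥ (gᵀ *ᵥ y)) by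
          simp only [Matrix.mulVec_mulVec, Matrix.mul_assoc],
          hgv, Matrix.dotProduct_mulVec]
      rw [Matrix.add_mulVec, dotProduct_add, hgr]
      ring
    rw [hA, hA', hB, hC, dotProduct_neg, hD, hE] at hD0
    have hyzero : y ⬝ᵥ ((Rt (xt t) + g * r * gᵀ) *ᵥ y) = 0 := by linarith
    by_contra hne
    have hne' : y ≠ 0 := hne
    exact absurd hyzero (ne_of_gt (hpd t y hne'))
  -- Step 2: xt t = 0
  have hxt0 : ∀ t, xt t = 0 := by
    intro t
    by_contra hne
    have h1 := hQpd.dotProduct_mulVec_pos (x := xt t) hne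
    rw [hy0 t] at h1
    simp at h1
  refine ⟨hxt0, ?_, ?_⟩
  -- Step 3: xc constant
  · have hxc0 : ∀ t, HasDerivAt xc 0 t := by
      intro t
      have h := hxcdiff t
      rw [hy0 t] at h
      simpa using h
    intro t s
    have hdiff : Differentiable ℝ xc := fun t => (hxc0 t).differentiableAt
    have hfz : ∀ u : ℝ, fderiv ℝ xc u = 0 := by
      intro u
      have h := (hxc0 u).hasFDerivAt.fderiv
      rw [h]
      ext z
      simp
    exact is_const_of_fderiv_eq_zero hdiff hfz t s
  -- Step 4: L *ᵥ xc t = 0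
  · intro t
    have hconst0 : HasDerivAt xt 0 t := by
      have : xt = fun _ => (0 : BIdx nG nE nN → ℝ) := funext hxt0
      rw [this]
      exact hasDerivAt_const t _
    have h := hxdiff t
    rw [hy0 t] at h
    have hD := hconst0.unique h
    simp only [Matrix.mulVec_zero, Matrix.mulVec_neg, neg_zero, zero_sub, neg_neg,
      zero_add] at hD
    -- hD : 0 = g *ᵥ (w⁻¹ *ᵥ (L *ᵥ xc t))
    have hv : w⁻¹ *ᵥ (L *ᵥ xc t) = 0 := by
      funext i
      have := congrFun hD (Sum.inl i)
      rw [gMat_mulVec_inl] at this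
      simpa using this.symm
    have : (w * w⁻¹) *ᵥ (L *ᵥ xc t) = 0 := by
      rw [← Matrix.mulVec_mulVec, hv, Matrix.mulVec_zero]
    rwa [Matrix.mul_nonsing_inv w hw, Matrix.one_mulVec] at this
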